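/- Let D and D' be two dictionaries over the same event alphabet, both satisfying Condition A2. Then O(D) = O(D') if and only if D = D'. -/

import Mathlib

/-- A separation of a sentence `E` with respect to a dictionary `D` is a list `S` of
pairwise distinct patterns, each belonging to `D`, whose concatenation equals `E`. -/
def IsSeparation {𝓔 : Type*} (D : Finset (List 𝓔)) (S : List (List 𝓔)) (E : List 𝓔) : Prop :=
  S.Nodup ∧ (∀ w ∈ S, w ∈ D) ∧ S.flatten = E

/-- The set of sentences generated by a dictionary `D`: those admitting at least one
separation with respect to `D`. -/
def genSet {𝓔 : Type*} (D : Finset (List 𝓔)) : Set (List 𝓔) :=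
  {E | ∃ S, IsSeparation D S E}

/-- Condition A2: every pattern in the dictionary of length at least 2 has pairwise
distinct entries. -/
def CondA2 {𝓔 : Type*} (D : Finset (List 𝓔)) : Prop :=
  ∀ w ∈ D, 2 ≤ w.length → w.Nodup

namespace DictIdent

open List

variable {α : Type*}

section CS

variable [DecidableEq α]

/-- All concatenations of orderings of the finite set `A` of words. -/
noncomputable def CS (A : Finset (List α)) : Finset (List α) :=
  (A.toList.permutations.map List.flatten).toFinset

lemma mem_CS {A : Finset (List α)} {X : List α} :
    X ∈ CS A ↔ ∃ l, l ~ A.toList ∧ l.flatten = X := by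
  simp only [CS, List.mem_toFinset, List.mem_map, List.mem_permutations]

lemma CS_nonempty (A : Finset (List α)) : (CS A).Nonempty :=
  ⟨A.toList.flatten, mem_CS.2 ⟨A.toList, List.Perm.refl _, rfl⟩⟩

lemma perm_toList {A : Finset (List α)} {l : List (List α)}
    (h1 : l.Nodup) (h2 : ∀ x, x ∈ l ↔ x ∈ A) : l ~ A.toList :=
  List.perm_of_nodup_nodup_toFinset_eq h1 A.nodup_toList
    (by ext x; simp [h2, Finset.mem_toList])

end CS

section LexFacts

variable [LinearOrder α]

lemma append_lt_append_left_iff {u X Y : List α} : u ++ X < u ++ Y ↔ X < Y := by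
  induction u with
  | nil => exact Iff.rfl
  | cons a u ih =>
    rw [List.cons_append, List.cons_append]
    simp only [List.cons_lt_cons_iff, lt_irrefl, false_or, true_and]
    exact ih

lemma append_le_append_left_iff {u X Y : List α} : u ++ X ≤ u ++ Y ↔ X ≤ Y := by
  rw [← not_lt, ← not_lt, append_lt_append_left_iff]

lemma head_le_of_cons_le {a b : α} {s t : List α} (h : (a :: s) ≤ (b :: t)) : a ≤ b := by
  by_contra hb
  push_neg at hb
  exact absurd (List.Lex.rel hb : (b :: t) < (a :: s)) (not_lt.2 h)

end LexFacts

section Core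

variable [DecidableEq α] [LinearOrder α]

/-- After stripping the first piece of the lexicographically minimal concatenation,
we get the lexicographically minimal concatenation of the remaining pieces. -/
lemma min'_erase {A : Finset (List α)} {u : List α} {tl : List (List α)}
    (hl : (u :: tl) ~ A.toList)
    (hmin : ∀ Z ∈ CS A, u ++ tl.flatten ≤ Z) :
    (CS (A.erase u)).min' (CS_nonempty _) = tl.flatten := by
  have hnd : (u :: tl).Nodup := hl.nodup_iff.mpr A.nodup_toList
  have hu_tl : u ∉ tl := (List.nodup_cons.1 hnd).1
  have htlnd : tl.Nodup := (List.nodup_cons.1 hnd).2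
  have huA : u ∈ A := Finset.mem_toList.1 (hl.subset (List.mem_cons_self))
  have htl_perm : tl ~ (A.erase u).toList := by
    refine perm_toList htlnd fun x => ⟨fun hx => ?_, fun hx => ?_⟩
    · refine Finset.mem_erase.2 ⟨fun hxu => hu_tl (hxu ▸ hx), ?_⟩
      exact Finset.mem_toList.1 (hl.subset (List.mem_cons_of_mem _ hx))
    · obtain ⟨hxu, hxA⟩ := Finset.mem_erase.1 hx
      have : x ∈ u :: tl := hl.symm.subset (Finset.mem_toList.2 hxA)
      rcases List.mem_cons.1 this with h | h
      · exact absurd h hxu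
      · exact h
  refine le_antisymm (Finset.min'_le _ _ (mem_CS.2 ⟨tl, htl_perm, rfl⟩)) ?_
  obtain ⟨m, hm, hfm⟩ := mem_CS.1 (Finset.min'_mem (CS (A.erase u)) (CS_nonempty _))
  rw [← hfm]
  have hmnd : m.Nodup := hm.nodup_iff.mpr (A.erase u).nodup_toList
  have hum : u ∉ m := fun h => by
    have := Finset.mem_toList.1 (hm.subset h)
    exact (Finset.mem_erase.1 this).1 rfl
  have humperm : (u :: m) ~ A.toList := by
    refine perm_toList (List.nodup_cons.2 ⟨hum, hmnd⟩) fun x => ⟨fun hx => ?_, fun hx => ?_⟩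
    · rcases List.mem_cons.1 hx with h | h
      · exact h ▸ huA
      · exact Finset.mem_of_mem_erase (Finset.mem_toList.1 (hm.subset h))
    · by_cases hxu : x = u
      · exact hxu ▸ (List.mem_cons_self : u ∈ u :: m)
      · exact List.mem_cons_of_mem _
          (hm.symm.subset (Finset.mem_toList.2 (Finset.mem_erase.2 ⟨hxu, hx⟩)))
  have : u ++ tl.flatten ≤ u ++ m.flatten := by
    have := hmin _ (mem_CS.2 ⟨u :: m, humperm, rfl⟩)
    simpa [List.flatten_cons] using this
  exact append_le_append_left_iff.1 this

/-- Crux: the first piece of any reading of the common lexicographic minimum cannot be a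
proper prefix of the first piece of another reading, provided it belongs to the other
dictionary. -/
lemma no_proper {A B : Finset (List α)}
    (hAne : ∀ w ∈ A, w ≠ [])
    (hBnd : ∀ w ∈ B, w.Nodup)
    {X u v : List α} {tl rtl : List (List α)}
    (hlA : (u :: tl) ~ A.toList) (hXA : u ++ tl.flatten = X)
    (hrB : (v :: rtl) ~ B.toList) (hXB : v ++ rtl.flatten = X)
    (hminA : ∀ Z ∈ CS A, X ≤ Z) (hminB : ∀ Z ∈ CS B, X ≤ Z)
    (huB : u ∈ B) (hpre : u <+: v) (hne : u ≠ v) : False := by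
  obtain ⟨t, rfl⟩ := hpre
  have ht : t ≠ [] := by
    rintro rfl
    exact hne (by simp)
  have huA : u ∈ A := Finset.mem_toList.1 (hlA.subset (List.mem_cons_self))
  have hune : u ≠ [] := hAne u huA
  obtain ⟨a, u', rfl⟩ : ∃ a u', u = a :: u' := by
    cases u with
    | nil => exact absurd rfl hune
    | cons a u' => exact ⟨a, u', rfl⟩
  obtain ⟨b, t', rfl⟩ : ∃ b t', t = b :: t' := by
    cases t with
    | nil => exact absurd rfl ht
    | cons b t' => exact ⟨b, t', rfl⟩
  have hvB : (a :: u') ++ (b :: t') ∈ B :=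
    Finset.mem_toList.1 (hrB.subset (List.mem_cons_self))
  have hvnd : ((a :: u') ++ (b :: t')).Nodup := hBnd _ hvB
  have hab : a ≠ b := by
    intro h
    exact (List.nodup_append.1 hvnd).2.2 a List.mem_cons_self b List.mem_cons_self h
  -- the word `a :: u'` occurs somewhere in `rtl`
  have hu_rtl : (a :: u') ∈ rtl := by
    have : (a :: u') ∈ ((a :: u') ++ (b :: t')) :: rtl :=
      hrB.symm.subset (Finset.mem_toList.2 huB)
    rcases List.mem_cons.1 this with h | h
    · exact absurd h hne
    · exact h
  obtain ⟨s1, s2, rfl⟩ := List.append_of_mem hu_rtl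
  -- B-side comparison: move `a :: u'` to the front
  have hpermB : ((a :: u') :: ((a :: u') ++ (b :: t')) :: (s1 ++ s2)) ~ B.toList := by
    calc (a :: u') :: ((a :: u') ++ (b :: t')) :: (s1 ++ s2)
        ~ ((a :: u') ++ (b :: t')) :: (a :: u') :: (s1 ++ s2) := List.Perm.swap _ _ _
      _ ~ ((a :: u') ++ (b :: t')) :: (s1 ++ (a :: u') :: s2) :=
          List.Perm.cons _ List.perm_middle.symm
      _ ~ B.toList := hrB
  have hXeq : X = (a :: u') ++ ((b :: t') ++ (s1 ++ (a :: u') :: s2).flatten) := by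
    rw [← hXB, List.append_assoc]
  have h1 : X ≤ (a :: u') ++ (((a :: u') ++ (b :: t')) ++ (s1 ++ s2).flatten) := by
    have := hminB _ (mem_CS.2 ⟨_, hpermB, rfl⟩)
    simpa [List.flatten_cons, List.append_assoc] using this
  have h2 : ((b :: t') ++ (s1 ++ (a :: u') :: s2).flatten) ≤
      ((a :: u') ++ (b :: t')) ++ (s1 ++ s2).flatten := by
    rw [hXeq] at h1
    exact append_le_append_left_iff.1 h1
  have hba : b < a := by
    have hble : b ≤ a := by
      have h2' : (b :: (t' ++ (s1 ++ (a :: u') :: s2).flatten)) ≤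
          (a :: (u' ++ ((b :: t') ++ (s1 ++ s2).flatten))) := by
        simpa [List.cons_append, List.append_assoc] using h2
      exact head_le_of_cons_le h2'
    exact hble.lt_of_ne (Ne.symm hab)
  -- A-side: the second piece starts with `b`
  have htl : tl.flatten = (b :: t') ++ (s1 ++ (a :: u') :: s2).flatten := by
    apply List.append_cancel_left (as := a :: u')
    rw [hXA, hXeq]
  have htlne : tl ≠ [] := by
    rintro rfl
    simp at htl
  obtain ⟨w2, tl2, rfl⟩ : ∃ w2 tl2, tl = w2 :: tl2 := by
    cases tl with
    | nil => exact absurd rfl htlne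
    | cons w2 tl2 => exact ⟨w2, tl2, rfl⟩
  have hw2A : w2 ∈ A :=
    Finset.mem_toList.1 (hlA.subset (List.mem_cons_of_mem _ (List.mem_cons_self)))
  have hw2ne : w2 ≠ [] := hAne w2 hw2A
  obtain ⟨c, w2', rfl⟩ : ∃ c w2', w2 = c :: w2' := by
    cases w2 with
    | nil => exact absurd rfl hw2ne
    | cons c w2' => exact ⟨c, w2', rfl⟩
  have hcb : c = b := by
    have h := htl
    rw [List.flatten_cons, List.cons_append, List.cons_append] at h
    exact (List.cons.injEq _ _ _ _ ▸ h).1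
  subst hcb
  -- A-side comparison: move `w2` to the front, getting a lexicographically smaller string
  have hpermA : ((c :: w2') :: (a :: u') :: tl2) ~ A.toList :=
    (List.Perm.swap _ _ _).trans hlA
  have hle : X ≤ ((c :: w2') :: (a :: u') :: tl2).flatten :=
    hminA _ (mem_CS.2 ⟨_, hpermA, rfl⟩)
  have hlt : ((c :: w2') :: (a :: u') :: tl2).flatten < X := by
    rw [hXeq]
    simp only [List.flatten_cons, List.cons_append]
    exact List.Lex.rel hba
  exact absurd hle (not_le.2 hlt)

/-- Core lemma: two finsets of nonempty nodup words, mutually closed under proper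
prefixes of each other's words, with the same lexicographically minimal full
concatenation, are equal. -/
lemma core : ∀ n (A B : Finset (List α)), A.card = n →
    (∀ w ∈ A, w ≠ []) → (∀ w ∈ B, w ≠ []) →
    (∀ w ∈ A, w.Nodup) → (∀ w ∈ B, w.Nodup) →
    (∀ u ∈ A, ∀ v ∈ B, u <+: v → u ≠ v → u ∈ B) →
    (∀ v ∈ B, ∀ u ∈ A, v <+: u → v ≠ u → v ∈ A) →
    (CS A).min' (CS_nonempty A) = (CS B).min' (CS_nonempty B) → A = B := by
  intro n
  induction n using Nat.strong_induction_on with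
  | _ n IH =>
    intro A B hcard hAne hBne hAnd hBnd hprefAB hprefBA hmin
    set X := (CS A).min' (CS_nonempty A) with hX
    have hXA : X ∈ CS A := Finset.min'_mem _ _
    have hXB : X ∈ CS B := hmin ▸ Finset.min'_mem _ _
    have hminA : ∀ Z ∈ CS A, X ≤ Z := fun Z hZ => Finset.min'_le _ _ hZ
    have hminB : ∀ Z ∈ CS B, X ≤ Z := fun Z hZ => hmin ▸ Finset.min'_le _ _ hZ
    obtain ⟨l, hl, hfl⟩ := mem_CS.1 hXA
    obtain ⟨r, hr, hfr⟩ := mem_CS.1 hXB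
    rcases Finset.eq_empty_or_nonempty A with rfl | hAnonempty
    · -- A empty ⇒ X = [] ⇒ B empty
      have hlnil : l = [] := by
        have : l ~ ([] : List (List α)) := by simpa using hl
        exact this.eq_nil
      have hXnil : X = [] := by rw [← hfl, hlnil]; rfl
      rcases Finset.eq_empty_or_nonempty B with rfl | hBne'
      · rfl
      · obtain ⟨w, hw⟩ := hBne'
        have hwr : w ∈ r := hr.symm.subset (Finset.mem_toList.2 hw)
        have : w = [] := by
          have : r.flatten = [] := by rw [hfr, hXnil]
          exact (List.flatten_eq_nil_iff.1 this) w hwr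
        exact absurd this (hBne w hw)
    · -- A nonempty
      have hlne : l ≠ [] := by
        rintro rfl
        have : A.toList ~ ([] : List (List α)) := hl.symm
        have := this.eq_nil
        exact hAnonempty.ne_empty (by rwa [Finset.toList_eq_nil] at this)
      obtain ⟨u, tl, rfl⟩ : ∃ u tl, l = u :: tl := by
        cases l with
        | nil => exact absurd rfl hlne
        | cons u tl => exact ⟨u, tl, rfl⟩
      have hXflA : u ++ tl.flatten = X := by rw [← hfl]; rfl
      have huA : u ∈ A := Finset.mem_toList.1 (hl.subset (List.mem_cons_self))
      have hrne : r ≠ [] := by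
        rintro rfl
        have hXnil : X = [] := by rw [← hfr]; rfl
        have : u ≠ [] := hAne u huA
        rw [← hXflA] at hXnil
        exact this (List.append_eq_nil_iff.1 hXnil).1
      obtain ⟨v, rtl, rfl⟩ : ∃ v rtl, r = v :: rtl := by
        cases r with
        | nil => exact absurd rfl hrne
        | cons v rtl => exact ⟨v, rtl, rfl⟩
      have hXflB : v ++ rtl.flatten = X := by rw [← hfr]; rfl
      have hvB : v ∈ B := Finset.mem_toList.1 (hr.subset (List.mem_cons_self))
      have hupre : u <+: X := ⟨tl.flatten, hXflA⟩
      have hvpre : v <+: X := ⟨rtl.flatten, hXflB⟩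
      by_cases huv : u = v
      · -- strip the common first piece and recurse
        subst huv
        have hErase : (CS (A.erase u)).min' (CS_nonempty _) = tl.flatten :=
          min'_erase hl (fun Z hZ => hXflA ▸ hminA Z hZ)
        have hErase' : (CS (B.erase u)).min' (CS_nonempty _) = rtl.flatten :=
          min'_erase hr (fun Z hZ => hXflB ▸ hminB Z hZ)
        have hflat : tl.flatten = rtl.flatten :=
          List.append_cancel_left (hXflA.trans hXflB.symm)
        have hcard' : (A.erase u).card < n := by
          rw [Finset.card_erase_of_mem huA, ← hcard]
          have : 0 < A.card := Finset.card_pos.2 hAnonempty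
          omega
        have hrec : A.erase u = B.erase u := by
          refine IH _ hcard' _ _ rfl ?_ ?_ ?_ ?_ ?_ ?_ ?_
          · exact fun w hw => hAne w (Finset.mem_of_mem_erase hw)
          · exact fun w hw => hBne w (Finset.mem_of_mem_erase hw)
          · exact fun w hw => hAnd w (Finset.mem_of_mem_erase hw)
          · exact fun w hw => hBnd w (Finset.mem_of_mem_erase hw)
          · intro x hx y hy hp hne
            refine Finset.mem_erase.2 ⟨(Finset.mem_erase.1 hx).1, ?_⟩
            exact hprefAB x (Finset.mem_of_mem_erase hx) y (Finset.mem_of_mem_erase hy) hp hne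
          · intro x hx y hy hp hne
            refine Finset.mem_erase.2 ⟨(Finset.mem_erase.1 hx).1, ?_⟩
            exact hprefBA x (Finset.mem_of_mem_erase hx) y (Finset.mem_of_mem_erase hy) hp hne
          · rw [hErase, hErase', hflat]
        calc A = insert u (A.erase u) := (Finset.insert_erase huA).symm
          _ = insert u (B.erase u) := by rw [hrec]
          _ = B := Finset.insert_erase hvB
      · -- distinct first pieces: impossible
        exfalso
        rcases le_total u.length v.length with hle | hle
        · have hpre : u <+: v := List.prefix_of_prefix_length_le hupre hvpre hle
          exact no_proper hAne hBnd hl hXflA hr hXflB hminA hminB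
            (hprefAB u huA v hvB hpre huv) hpre huv
        · have hpre : v <+: u := List.prefix_of_prefix_length_le hvpre hupre hle
          exact no_proper hBne hAnd hr hXflB hl hXflA hminB hminA
            (hprefBA v hvB u huA hpre (Ne.symm huv)) hpre (Ne.symm huv)

end Core

section Capacity

variable {𝓔 : Type*} [DecidableEq 𝓔]

omit [DecidableEq 𝓔] in
lemma nodup_of_short {w : List 𝓔} (h : w.length ≤ 1) : w.Nodup := by
  match w, h with
  | [], _ => exact List.nodup_nil
  | [a], _ => exact List.nodup_singleton a

/-- One inclusion of the key "all maximal sentences agree" step. -/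
lemma CS_sub (D D' : Finset (List 𝓔)) (T : Finset 𝓔)
    (hgen : genSet D ⊆ genSet D')
    (hsum : ∑ w ∈ D'.filter (fun w => w.toFinset ⊆ T), w.length ≤
      ∑ w ∈ D.filter (fun w => w.toFinset ⊆ T), w.length)
    (hD'ne : ∀ w ∈ D', w ≠ []) :
    CS (D.filter (fun w => w.toFinset ⊆ T)) ⊆ CS (D'.filter (fun w => w.toFinset ⊆ T)) := by
  set A := D.filter (fun w => w.toFinset ⊆ T) with hA
  set B := D'.filter (fun w => w.toFinset ⊆ T) with hB
  intro X hX
  obtain ⟨l, hl, hfl⟩ := mem_CS.1 hX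
  have hlnd : l.Nodup := hl.nodup_iff.mpr A.nodup_toList
  have hlA : ∀ w ∈ l, w ∈ A := fun w hw => Finset.mem_toList.1 (hl.subset hw)
  have hXgen : X ∈ genSet D := by
    exact ⟨l, hlnd, fun w hw => (Finset.mem_filter.1 (hlA w hw)).1, hfl⟩
  obtain ⟨S, hSnd, hSD', hSfl⟩ := hgen hXgen
  -- letters of X lie in T
  have hXT : ∀ x ∈ X, x ∈ T := by
    intro x hx
    rw [← hfl] at hx
    obtain ⟨m, hm, hxm⟩ := List.mem_flatten.1 hx
    exact (Finset.mem_filter.1 (hlA m hm)).2 (List.mem_toFinset.2 hxm)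
  have hSB : ∀ w ∈ S, w ∈ B := by
    intro w hw
    refine Finset.mem_filter.2 ⟨hSD' w hw, fun x hx => ?_⟩
    refine hXT x ?_
    rw [← hSfl]
    exact List.mem_flatten.2 ⟨w, hw, List.mem_toFinset.1 hx⟩
  -- sums force S to use exactly all of B
  have hsum1 : ∑ w ∈ S.toFinset, w.length = X.length := by
    rw [List.sum_toFinset _ hSnd, ← List.length_flatten, hSfl]
  have hsum2 : ∑ w ∈ A, w.length = X.length := by
    have hltoF : l.toFinset = A := by
      rw [List.toFinset_eq_of_perm _ _ hl, Finset.toList_toFinset]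
    rw [← hltoF, List.sum_toFinset _ hlnd, ← List.length_flatten, hfl]
  have hSsub : S.toFinset ⊆ B := fun w hw => hSB w (List.mem_toFinset.1 hw)
  have hSeq : S.toFinset = B := by
    by_contra hne
    have hss : S.toFinset ⊂ B := Finset.ssubset_iff_subset_ne.2 ⟨hSsub, hne⟩
    obtain ⟨i, hiB, hiS⟩ := Finset.exists_of_ssubset hss
    have hlt : ∑ w ∈ S.toFinset, w.length < ∑ w ∈ B, w.length := by
      refine Finset.sum_lt_sum_of_subset hSsub hiB hiS ?_ ?_
      · have : i ≠ [] := hD'ne i (Finset.mem_filter.1 hiB).1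
        exact List.length_pos_iff.2 this
      · intro j _ _
        exact Nat.zero_le _
    omega
  have hSperm : S ~ B.toList := perm_toList hSnd (fun x => by
    rw [← List.mem_toFinset, hSeq])
  exact mem_CS.2 ⟨S, hSperm, hSfl⟩

/-- Capacity bound: the total length of `D`'s patterns supported in `T` is at most
that of `D'`'s, when `genSet D ⊆ genSet D'`. -/
lemma sum_le_sum (D D' : Finset (List 𝓔)) (T : Finset 𝓔)
    (hgen : genSet D ⊆ genSet D') :
    ∑ w ∈ D.filter (fun w => w.toFinset ⊆ T), w.length ≤
      ∑ w ∈ D'.filter (fun w => w.toFinset ⊆ T), w.length := by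
  set A := D.filter (fun w => w.toFinset ⊆ T) with hA
  set B := D'.filter (fun w => w.toFinset ⊆ T) with hB
  set E := A.toList.flatten with hE
  have hEgen : E ∈ genSet D :=
    ⟨A.toList, A.nodup_toList,
      fun w hw => (Finset.mem_filter.1 (Finset.mem_toList.1 hw)).1, rfl⟩
  obtain ⟨S, hSnd, hSD', hSfl⟩ := hgen hEgen
  have hET : ∀ x ∈ E, x ∈ T := by
    intro x hx
    obtain ⟨m, hm, hxm⟩ := List.mem_flatten.1 hx
    exact (Finset.mem_filter.1 (Finset.mem_toList.1 hm)).2 (List.mem_toFinset.2 hxm)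
  have hSB : ∀ w ∈ S, w ∈ B := by
    intro w hw
    refine Finset.mem_filter.2 ⟨hSD' w hw, fun x hx => ?_⟩
    refine hET x ?_
    rw [← hSfl]
    exact List.mem_flatten.2 ⟨w, hw, List.mem_toFinset.1 hx⟩
  have h1 : ∑ w ∈ A, w.length = E.length := by
    have : A.toList.toFinset = A := Finset.toList_toFinset A
    rw [← this, List.sum_toFinset _ A.nodup_toList, ← List.length_flatten]
  have h2 : ∑ w ∈ S.toFinset, w.length = E.length := by
    rw [List.sum_toFinset _ hSnd, ← List.length_flatten, hSfl]
  have h3 : ∑ w ∈ S.toFinset, w.length ≤ ∑ w ∈ B, w.length :=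
    Finset.sum_le_sum_of_subset (fun w hw => hSB w (List.mem_toFinset.1 hw))
  omega

end Capacity

section Key

variable {𝓔 : Type*} [DecidableEq 𝓔] [LinearOrder 𝓔]

lemma key (D D' : Finset (List 𝓔))
    (hD : ∀ w ∈ D, w ≠ []) (hD' : ∀ w ∈ D', w ≠ [])
    (hA2 : CondA2 D) (hA2' : CondA2 D')
    (hO : genSet D = genSet D') (k : ℕ)
    (hbelow : ∀ w : List 𝓔, w.length < k → (w ∈ D ↔ w ∈ D'))
    (τ : List 𝓔) (hτ : τ ∈ D) (hlen : τ.length = k) : τ ∈ D' := by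
  by_contra hτ'
  have hτne : τ ≠ [] := hD τ hτ
  have h1 : τ ∈ genSet D := ⟨[τ], List.nodup_singleton τ, by simpa using hτ, by simp⟩
  have h2 : τ ∈ genSet D' := hO ▸ h1
  obtain ⟨S, hSnd, hSD', hSfl⟩ := h2
  -- S has at least two pieces, so k ≥ 2 and τ has no duplicate letters
  have hk2 : 2 ≤ k := by
    rcases S with _ | ⟨w1, S1⟩
    · exact absurd hSfl.symm hτne
    · rcases S1 with _ | ⟨w2, S2⟩
      · exact absurd (show τ ∈ D' by
          have : w1 = τ := by simpa using hSfl
          exact this ▸ hSD' w1 (List.mem_cons_self)) hτ'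
      · have hw1 : 0 < w1.length :=
          List.length_pos_iff.2 (hD' w1 (hSD' _ (List.mem_cons_self)))
        have hw2 : 0 < w2.length :=
          List.length_pos_iff.2 (hD' w2 (hSD' _ (List.mem_cons_of_mem _ (List.mem_cons_self))))
        have : τ.length = w1.length + (w2.length + S2.flatten.length) := by
          rw [← hSfl]
          simp [List.flatten_cons, List.length_append]
        omega
  have hτnd : τ.Nodup := hA2 τ hτ (hlen ▸ hk2)
  set T := τ.toFinset with hT
  have hTcard : T.card = k := by
    rw [hT, List.toFinset_card_of_nodup hτnd, hlen]
  set A := D.filter (fun w => w.toFinset ⊆ T) with hA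
  set B := D'.filter (fun w => w.toFinset ⊆ T) with hB
  have hτA : τ ∈ A := Finset.mem_filter.2 ⟨hτ, Finset.Subset.refl _⟩
  have hAne : ∀ w ∈ A, w ≠ [] := fun w hw => hD w (Finset.mem_filter.1 hw).1
  have hBne : ∀ w ∈ B, w ≠ [] := fun w hw => hD' w (Finset.mem_filter.1 hw).1
  have hAnd : ∀ w ∈ A, w.Nodup := by
    intro w hw
    rcases le_or_gt w.length 1 with h | h
    · exact nodup_of_short h
    · exact hA2 w (Finset.mem_filter.1 hw).1 h
  have hBnd : ∀ w ∈ B, w.Nodup := by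
    intro w hw
    rcases le_or_gt w.length 1 with h | h
    · exact nodup_of_short h
    · exact hA2' w (Finset.mem_filter.1 hw).1 h
  have hAle : ∀ w ∈ A, w.length ≤ k := by
    intro w hw
    rw [← List.toFinset_card_of_nodup (hAnd w hw), ← hTcard]
    exact Finset.card_le_card (Finset.mem_filter.1 hw).2
  have hBle : ∀ w ∈ B, w.length ≤ k := by
    intro w hw
    rw [← List.toFinset_card_of_nodup (hBnd w hw), ← hTcard]
    exact Finset.card_le_card (Finset.mem_filter.1 hw).2
  have hprefAB : ∀ u ∈ A, ∀ v ∈ B, u <+: v → u ≠ v → u ∈ B := by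
    intro u hu v hv hp hne
    have hlt : u.length < v.length := by
      rcases lt_or_eq_of_le hp.length_le with h | h
      · exact h
      · exact absurd (hp.eq_of_length h) hne
    have huk : u.length < k := lt_of_lt_of_le hlt (hBle v hv)
    refine Finset.mem_filter.2 ⟨(hbelow u huk).1 (Finset.mem_filter.1 hu).1, ?_⟩
    intro x hx
    refine (Finset.mem_filter.1 hv).2 ?_
    exact List.mem_toFinset.2 (hp.subset (List.mem_toFinset.1 hx))
  have hprefBA : ∀ v ∈ B, ∀ u ∈ A, v <+: u → v ≠ u → v ∈ A := by
    intro v hv u hu hp hne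
    have hlt : v.length < u.length := by
      rcases lt_or_eq_of_le hp.length_le with h | h
      · exact h
      · exact absurd (hp.eq_of_length h) hne
    have hvk : v.length < k := lt_of_lt_of_le hlt (hAle u hu)
    refine Finset.mem_filter.2 ⟨(hbelow v hvk).2 (Finset.mem_filter.1 hv).1, ?_⟩
    intro x hx
    refine (Finset.mem_filter.1 hu).2 ?_
    exact List.mem_toFinset.2 (hp.subset (List.mem_toFinset.1 hx))
  -- total length capacity is symmetric
  have hsum : ∑ w ∈ A, w.length = ∑ w ∈ B, w.length :=
    le_antisymm (sum_le_sum D D' T hO.le) (sum_le_sum D' D T hO.ge)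
  have hCS : CS A = CS B :=
    le_antisymm (CS_sub D D' T hO.le hsum.ge hD')
      (CS_sub D' D T hO.ge hsum.le hD)
  have hmin : (CS A).min' (CS_nonempty A) = (CS B).min' (CS_nonempty B) := by
    have hBA : (CS B).min' (CS_nonempty B) ∈ CS A := by
      rw [hCS]; exact Finset.min'_mem _ _
    have hAB : (CS A).min' (CS_nonempty A) ∈ CS B := by
      rw [← hCS]; exact Finset.min'_mem _ _
    exact le_antisymm (Finset.min'_le _ _ hBA) (Finset.min'_le _ _ hAB)
  have hABeq : A = B :=
    core A.card A B rfl hAne hBne hAnd hBnd hprefAB hprefBA hmin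
  rw [hABeq] at hτA
  exact hτ' (Finset.mem_filter.1 hτA).1

end Key

end DictIdent

/-- **Dictionary identifiability for theme dictionary models (one-class case).**
If two dictionaries `D` and `D'` (finite sets of nonempty patterns) both satisfy
Condition A2, then they generate the same sentence set if and only if they are equal. -/
theorem dictionary_identifiable_of_condA2 {𝓔 : Type*} (D D' : Finset (List 𝓔))
    (hD : ∀ w ∈ D, w ≠ []) (hD' : ∀ w ∈ D', w ≠ [])
    (hA2 : CondA2 D) (hA2' : CondA2 D') :
    genSet D = genSet D' ↔ D = D' := by
  constructor
  · intro hO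
    letI : LinearOrder 𝓔 := IsWellOrder.linearOrder WellOrderingRel
    have hlayer : ∀ k : ℕ, ∀ w : List 𝓔, w.length = k → (w ∈ D ↔ w ∈ D') := by
      intro k
      induction k using Nat.strong_induction_on with
      | _ k IH =>
        intro w hw
        have hbelow : ∀ u : List 𝓔, u.length < k → (u ∈ D ↔ u ∈ D') :=
          fun u hu => IH u.length hu u rfl
        constructor
        · intro h
          exact DictIdent.key D D' hD hD' hA2 hA2' hO k hbelow w h hw
        · intro h
          exact DictIdent.key D' D hD' hD hA2' hA2 hO.symm k
            (fun u hu => (hbelow u hu).symm) w h hw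
    ext w
    exact hlayer w.length w rfl
  · rintro rfl
    rfl
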